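/- For Re(d) > Re(a) > 0, Re(b) > 0, Re(c) > 0, max{|x|,|z|} < 1 and 0 ≤ y < 1, the incomplete Appell F₁ function has the integral representation F₁[a,b,c;d;x,z;y] = (1/B(a,d-a)) ∫_0^y t^{a-1}(1-t)^{d-a-1}(1-xt)^{-b}(1-zt)^{-c} dt. -/

import Mathlib

open Complex
open scoped ENNReal NNReal

/-- Incomplete beta function `B_y(x,z) = ∫_0^y t^(x-1) (1-t)^(z-1) dt`. -/
noncomputable def incBeta (y : ℝ) (x z : ℂ) : ℂ :=
  ∫ t in (0:ℝ)..y, (t:ℂ)^(x-1) * (1 - (t:ℂ))^(z-1)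

/-- Pochhammer symbol `(a)_n`. -/
noncomputable def poch (a : ℂ) (n : ℕ) : ℂ := ∏ i ∈ Finset.range n, (a + i)

/-- Incomplete Pochhammer ratio `[b,c;y]_n`. -/
noncomputable def ipochL (b c : ℂ) (y : ℝ) (n : ℕ) : ℂ :=
  incBeta y (b + n) (c - b) / Complex.betaIntegral b (c - b)

/-- Incomplete Pochhammer ratio `{b,c;y}_n`. -/
noncomputable def ipochU (b c : ℂ) (y : ℝ) (n : ℕ) : ℂ :=
  incBeta (1 - y) (c - b) (b + n) / Complex.betaIntegral b (c - b)

/-- Gauss hypergeometric series `₂F₁(a,b;c;x)`. -/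
noncomputable def hyp2F1 (a b c x : ℂ) : ℂ :=
  ∑' n : ℕ, poch a n * poch b n / poch c n * x^n / (n.factorial : ℂ)

/-- Incomplete Gauss hypergeometric function `₂F₁(a,[b,c;y];x)`. -/
noncomputable def inc2F1L (a b c : ℂ) (y : ℝ) (x : ℂ) : ℂ :=
  ∑' n : ℕ, poch a n * ipochL b c y n * x^n / (n.factorial : ℂ)

/-- Incomplete Gauss hypergeometric function `₂F₁(a,{b,c;y};x)`. -/
noncomputable def inc2F1U (a b c : ℂ) (y : ℝ) (x : ℂ) : ℂ :=
  ∑' n : ℕ, poch a n * ipochU b c y n * x^n / (n.factorial : ℂ)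

/-- Incomplete confluent hypergeometric function `₁F₁([a,b;y];x)`. -/
noncomputable def inc1F1L (a b : ℂ) (y : ℝ) (x : ℂ) : ℂ :=
  ∑' n : ℕ, ipochL a b y n * x^n / (n.factorial : ℂ)

/-- Incomplete confluent hypergeometric function `₁F₁({a,b;y};x)`. -/
noncomputable def inc1F1U (a b : ℂ) (y : ℝ) (x : ℂ) : ℂ :=
  ∑' n : ℕ, ipochU a b y n * x^n / (n.factorial : ℂ)

/-- Incomplete Appell function `F₁[a,b,c;d;x,z;y]`. -/
noncomputable def incAppellF1 (a b c d x z : ℂ) (y : ℝ) : ℂ :=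
  ∑' p : ℕ × ℕ, ipochL a d y (p.1 + p.2) * poch b p.1 * poch c p.2 *
    x^p.1 * z^p.2 / ((p.1.factorial : ℂ) * (p.2.factorial : ℂ))

/-- Incomplete Riemann–Liouville fractional derivative `D_z^μ[f(z);y]`. -/
noncomputable def incRL (μ : ℂ) (f : ℂ → ℂ) (y : ℝ) (z : ℂ) : ℂ :=
  z^(-μ) / Complex.Gamma (-μ) * ∫ u in (0:ℝ)..y, f ((u:ℂ) * z) * (1 - (u:ℂ))^(-μ-1)

lemma poch_succ (b : ℂ) (n : ℕ) : poch b (n+1) = poch b n * (b + n) := by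
  simp [poch, Finset.prod_range_succ]

lemma poch_zero (b : ℂ) : poch b 0 = 1 := by simp [poch]

lemma norm_poch_succ (b : ℂ) (n : ℕ) :
    ‖poch b (n+1) / (n+1).factorial‖ = ‖poch b n / n.factorial‖ * (‖b + n‖ / (n+1)) := by
  rw [poch_succ, Nat.factorial_succ]
  push_cast
  rw [norm_div, norm_div, norm_mul, norm_mul]
  have h1 : ‖((n:ℂ) + 1)‖ = (n:ℝ) + 1 := by
    rw [show ((n:ℂ)+1) = ((n+1 : ℕ) : ℂ) by push_cast; ring, Complex.norm_natCast]
    push_cast; ring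
  rw [h1, div_mul_div_comm, mul_comm ‖((n.factorial : ℕ):ℂ)‖ ((n:ℝ)+1)]

lemma summable_pochdiv_pow (b : ℂ) {r : ℝ} (h0 : 0 ≤ r) (h1 : r < 1) :
    Summable (fun n : ℕ => ‖poch b n / n.factorial‖ * r ^ n) := by
  set l : ℝ := (1 + r) / 2 with hl
  have hrl : r < l := by rw [hl]; linarith
  have hl1 : l < 1 := by rw [hl]; linarith
  obtain ⟨N, hN⟩ := exists_nat_ge (‖b‖ * r / (l - r))
  apply summable_of_ratio_norm_eventually_le hl1
  filter_upwards [Filter.eventually_ge_atTop N] with n hn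
  have hcn : (0:ℝ) ≤ ‖poch b n / n.factorial‖ := norm_nonneg _
  rw [Real.norm_of_nonneg (by positivity), Real.norm_of_nonneg (by positivity),
    norm_poch_succ, pow_succ]
  have hbn : ‖b + n‖ ≤ ‖b‖ + n := by
    calc ‖b + n‖ ≤ ‖b‖ + ‖(n:ℂ)‖ := norm_add_le _ _
    _ = ‖b‖ + n := by simp [Complex.norm_natCast]
  have hkey : ‖b + n‖ / (n+1) * r ≤ l := by
    rw [div_mul_eq_mul_div, div_le_iff₀ (by positivity)]
    have h2 : ‖b‖ * r / (l - r) ≤ n := le_trans hN (by exact_mod_cast hn)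
    have h3 : ‖b‖ * r ≤ (l - r) * n := by
      rw [div_le_iff₀ (by linarith)] at h2; linarith [h2]
    nlinarith [norm_nonneg b, (show (0:ℝ) ≤ (n:ℝ) from n.cast_nonneg)]
  calc ‖poch b n / n.factorial‖ * (‖b + n‖/(n+1)) * (r^n * r)
      = (‖poch b n / n.factorial‖ * r^n) * (‖b + n‖/(n+1) * r) := by ring
    _ ≤ (‖poch b n / n.factorial‖ * r^n) * l := by
        apply mul_le_mul_of_nonneg_left hkey (by positivity)
    _ = l * (‖poch b n / n.factorial‖ * r^n) := by ring

lemma summable_pochdiv_deriv (b : ℂ) {r : ℝ} (h0 : 0 ≤ r) (h1 : r < 1) :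
    Summable (fun n : ℕ => ‖poch b n / n.factorial‖ * n * r ^ (n - 1)) := by
  set l : ℝ := (1 + r) / 2 with hl
  have hrl : r < l := by rw [hl]; linarith
  have hl1 : l < 1 := by rw [hl]; linarith
  obtain ⟨N, hN⟩ := exists_nat_ge (‖b‖ * r / (l - r))
  apply summable_of_ratio_norm_eventually_le hl1
  filter_upwards [Filter.eventually_ge_atTop (N + 1)] with n hn
  have hn1 : 1 ≤ n := le_trans (Nat.le_add_left 1 N) hn
  have hcn : (0:ℝ) ≤ ‖poch b n / n.factorial‖ := norm_nonneg _
  have hrpow : (0:ℝ) ≤ r ^ (n - 1) := by positivity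
  rw [Real.norm_of_nonneg (by positivity), Real.norm_of_nonneg (by positivity),
    norm_poch_succ]
  have hbn : ‖b + n‖ ≤ ‖b‖ + n := by
    calc ‖b + n‖ ≤ ‖b‖ + ‖(n:ℂ)‖ := norm_add_le _ _
    _ = ‖b‖ + n := by simp [Complex.norm_natCast]
  have h2 : ‖b‖ * r / (l - r) ≤ (n:ℝ) := by
    refine le_trans hN ?_
    exact_mod_cast le_trans (Nat.le_add_right N 1) hn
  have h3 : ‖b‖ * r ≤ (l - r) * n := by
    rw [div_le_iff₀ (by linarith)] at h2; linarith [h2]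
  have hkey : ‖b + n‖ * r ≤ l * n := by
    nlinarith [norm_nonneg b, (show (0:ℝ) ≤ (n:ℝ) from n.cast_nonneg)]
  have hpowsplit : r ^ (n + 1 - 1) = r ^ (n - 1) * r := by
    rw [Nat.add_sub_cancel, ← pow_succ]
    congr 1
    omega
  rw [hpowsplit]
  push_cast
  calc ‖poch b n / n.factorial‖ * (‖b + n‖ / (n+1)) * ((n:ℝ)+1) * (r ^ (n-1) * r)
      = (‖poch b n / n.factorial‖ * r ^ (n-1)) * (‖b + n‖ * r) := by
        field_simp
    _ ≤ (‖poch b n / n.factorial‖ * r ^ (n-1)) * (l * n) := by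
        apply mul_le_mul_of_nonneg_left hkey (by positivity)
    _ = l * (‖poch b n / n.factorial‖ * (n:ℝ) * r ^ (n-1)) := by ring

lemma summable_binomial (b w : ℂ) (hw : ‖w‖ < 1) :
    Summable (fun n : ℕ => poch b n / n.factorial * w ^ n) := by
  refine Summable.of_norm_bounded (summable_pochdiv_pow b (norm_nonneg w) hw) ?_
  intro n
  rw [norm_mul, norm_pow]

lemma hasSum_binomial (b w : ℂ) (hw : ‖w‖ < 1) :
    HasSum (fun n : ℕ => poch b n / n.factorial * w ^ n) ((1 - w) ^ (-b)) := by
  set c : ℕ → ℂ := fun n => poch b n / n.factorial with hc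
  set G : ℂ → ℂ := fun u => ∑' n, c n * u ^ n with hG
  set D : ℂ → ℂ := fun u => ∑' n, c n * (n * u ^ (n - 1)) with hD
  have hsum : ∀ u : ℂ, ‖u‖ < 1 → Summable (fun n => c n * u ^ n) := by
    intro u hu
    refine Summable.of_norm_bounded (summable_pochdiv_pow b (norm_nonneg u) hu) ?_
    intro n; rw [norm_mul, norm_pow]
  have hsumD : ∀ u : ℂ, ‖u‖ < 1 → Summable (fun n => c n * ((n:ℂ) * u ^ (n - 1))) := by
    intro u hu
    refine Summable.of_norm_bounded (summable_pochdiv_deriv b (norm_nonneg u) hu) ?_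
    intro n
    rw [norm_mul, norm_mul, norm_pow, Complex.norm_natCast, ← mul_assoc]
  have hsumS : ∀ u : ℂ, ‖u‖ < 1 → Summable (fun n => c n * (n:ℂ) * u ^ n) := by
    intro u hu
    refine Summable.of_norm_bounded
      ((summable_pochdiv_deriv b (norm_nonneg u) hu).mul_right ‖u‖) ?_
    intro n
    rw [norm_mul, norm_mul, norm_pow, Complex.norm_natCast]
    rcases n with _ | m
    · simp
    · have : ‖u‖ ^ (m + 1) = ‖u‖ ^ (m + 1 - 1) * ‖u‖ := by
        rw [Nat.add_sub_cancel, pow_succ]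
      rw [this]; exact le_of_eq (by simp only [hc]; ring)
  -- derivative of G
  have hG' : ∀ u : ℂ, ‖u‖ < 1 → HasDerivAt G (D u) u := by
    intro u hu
    set r : ℝ := (‖u‖ + 1) / 2 with hr
    have hr0 : 0 < r := by positivity
    have hr1 : r < 1 := by rw [hr]; linarith
    have hur : ‖u‖ < r := by rw [hr]; linarith
    refine hasDerivAt_tsum_of_isPreconnected (y₀ := (0:ℂ))
      (summable_pochdiv_deriv b hr0.le hr1) (Metric.isOpen_ball (x := (0:ℂ)) (ε := r))
      ((convex_ball (0:ℂ) r).isPreconnected)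
      (g := fun n y => c n * y ^ n) (g' := fun n y => c n * ((n:ℂ) * y ^ (n - 1)))
      (fun n y _ => (hasDerivAt_pow n y).const_mul (c n)) ?_ ?_ ?_ ?_
    · intro n v hv
      rw [Metric.mem_ball, dist_zero_right] at hv
      rw [norm_mul, norm_mul, norm_pow, Complex.norm_natCast, ← mul_assoc]
      have : ‖v‖ ^ (n - 1) ≤ r ^ (n - 1) := pow_le_pow_left₀ (norm_nonneg v) hv.le _
      have h0 : 0 ≤ ‖c n‖ * (n:ℝ) := by positivity
      exact mul_le_mul_of_nonneg_left this h0
    · rw [Metric.mem_ball, dist_zero_right]; simpa using hr0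
    · apply summable_of_ne_finset_zero (s := {0})
      intro n hn
      simp only [Finset.mem_singleton] at hn
      show c n * (0:ℂ) ^ n = 0
      rw [zero_pow hn, mul_zero]
    · rw [Metric.mem_ball, dist_zero_right]; exact hur
  -- the key ODE identity
  have hkey : ∀ u : ℂ, ‖u‖ < 1 → (1 - u) * D u = b * G u := by
    intro u hu
    have s1 := hsum u hu
    have s2 := hsumD u hu
    have s3 := hsumS u hu
    have hDdef : D u = ∑' (n : ℕ), c n * ((n:ℂ) * u ^ (n - 1)) := rfl
    have hDu : D u = b * G u + ∑' n, c n * (n:ℂ) * u ^ n := by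
      rw [hDdef]
      rw [Summable.tsum_eq_zero_add s2]
      simp only [Nat.cast_zero, zero_mul, mul_zero, zero_add]
      have hterm : ∀ n : ℕ, c (n+1) * ((((n+1) : ℕ):ℂ) * u ^ (n + 1 - 1)) =
          b * (c n * u ^ n) + c n * (n:ℂ) * u ^ n := by
        intro n
        push_cast
        have hfac : ((n+1).factorial : ℂ) = ((n:ℂ)+1) * (n.factorial : ℂ) := by
          rw [Nat.factorial_succ]; push_cast; ring
        have hfne : (n.factorial : ℂ) ≠ 0 := by exact_mod_cast n.factorial_ne_zero
        have hne : ((n:ℂ)+1) ≠ 0 := by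
          intro h
          have := congrArg Complex.re h
          push_cast at this
          simp at this
          nlinarith [n.cast_nonneg (α := ℝ)]
        rw [hc]
        simp only
        rw [poch_succ, hfac]
        field_simp
      rw [tsum_congr hterm, Summable.tsum_add (s1.mul_left b) s3, tsum_mul_left]
    have hwDu : u * D u = ∑' n, c n * (n:ℂ) * u ^ n := by
      have hDdef2 : D u = ∑' (n : ℕ), c n * ((n:ℂ) * u ^ (n - 1)) := rfl
      rw [hDdef2, ← tsum_mul_left]
      apply tsum_congr
      intro n
      rcases n with _ | m
      · simp
      · rw [Nat.add_sub_cancel, pow_succ]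
        ring
    have : (1 - u) * D u = D u - u * D u := by ring
    rw [this, hwDu, hDu]
    ring
  -- H := G * (1-u)^b has zero derivative on the unit ball
  have hH' : ∀ u ∈ Metric.ball (0:ℂ) 1,
      HasDerivAt (fun v => G v * (1 - v) ^ b) 0 u := by
    intro u hu
    rw [Metric.mem_ball, dist_zero_right] at hu
    have hre : 0 < (1 - u).re := by
      have := Complex.abs_re_le_norm u
      rw [Complex.sub_re, Complex.one_re]
      have : u.re ≤ ‖u‖ := Complex.re_le_norm u
      linarith
    have hslit : (1 - u) ∈ Complex.slitPlane := Or.inl hre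
    have hne : (1 - u) ≠ 0 := by
      intro h
      rw [h] at hre
      simp at hre
    have d1 : HasDerivAt (fun v : ℂ => 1 - v) (-1) u := by
      simpa using (hasDerivAt_id u).const_sub 1
    have d2 : HasDerivAt (fun v : ℂ => (1 - v) ^ b) (b * (1 - u) ^ (b - 1) * (-1)) u :=
      d1.cpow_const hslit
    have dH := (hG' u hu).mul d2
    have heq : D u * (1 - u) ^ b + G u * (b * (1 - u) ^ (b - 1) * (-1)) = 0 := by
      have hpow : (1 - u) ^ b = (1 - u) ^ (b - 1) * (1 - u) := by
        conv_lhs => rw [show b = b - 1 + 1 by ring]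
        rw [Complex.cpow_add _ _ hne, Complex.cpow_one]
      rw [hpow]
      have : D u * ((1-u)^(b-1) * (1-u)) + G u * (b * (1-u)^(b-1) * (-1)) =
          (1-u)^(b-1) * ((1 - u) * D u - b * G u) := by ring
      rw [this, hkey u hu]
      ring
    rw [heq] at dH
    exact dH
  -- H is constant on the ball
  have hball : w ∈ Metric.ball (0:ℂ) 1 := by
    rw [Metric.mem_ball, dist_zero_right]; exact hw
  have hzero : (0:ℂ) ∈ Metric.ball (0:ℂ) 1 := by
    rw [Metric.mem_ball, dist_zero_right]; simp
  have hconst : G w * (1 - w) ^ b = G 0 * (1 - 0) ^ b := by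
    refine (convex_ball (0:ℂ) 1).is_const_of_fderivWithin_eq_zero (𝕜 := ℂ)
      (f := fun v => G v * (1 - v) ^ b) ?_ ?_ hball hzero
    · intro v hv
      exact ((hH' v hv).differentiableAt).differentiableWithinAt
    · intro v hv
      rw [fderivWithin_of_isOpen Metric.isOpen_ball hv]
      have := ((hH' v hv).hasFDerivAt).fderiv
      rw [this]
      ext t
      simp
  have hG0 : G 0 = 1 := by
    rw [hG]
    simp only
    rw [tsum_eq_single 0 (fun n hn => by rw [zero_pow hn, mul_zero])]
    rw [hc]
    simp [poch_zero]
  rw [hG0, one_mul, sub_zero, Complex.one_cpow] at hconst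
  have hpne : (1 - w) ^ b ≠ 0 := by
    intro h
    rw [Complex.cpow_eq_zero_iff] at h
    have hre : 0 < (1 - w).re := by
      rw [Complex.sub_re, Complex.one_re]
      have : w.re ≤ ‖w‖ := Complex.re_le_norm w
      linarith
    rw [h.1] at hre
    simp at hre
  have hGw : G w = (1 - w) ^ (-b) := by
    rw [Complex.cpow_neg]
    field_simp
    linear_combination hconst
  have h2 : HasSum (fun n => c n * w ^ n) (G w) := (hsum w hw).hasSum
  rw [hGw] at h2
  exact h2

open MeasureTheory in
set_option maxHeartbeats 2000000 in
theorem stmt18 (a b c d x z : ℂ) (y : ℝ)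
    (ha : 0 < a.re) (had : a.re < d.re) (hb : 0 < b.re) (hc : 0 < c.re)
    (hx : ‖x‖ < 1) (hz : ‖z‖ < 1)
    (hy0 : 0 ≤ y) (hy1 : y < 1) :
    incAppellF1 a b c d x z y = (1 / Complex.betaIntegral a (d - a)) *
      ∫ t in (0:ℝ)..y, (t:ℂ)^(a-1) * (1 - (t:ℂ))^(d-a-1) *
        (1 - x * t)^(-b) * (1 - z * t)^(-c) := by
  have hx' : ‖x‖ < 1 := hx
  have hz' : ‖z‖ < 1 := hz
  have hy1' : y ≤ 1 := hy1.le
  set B := Complex.betaIntegral a (d - a) with hB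
  set K : ℕ × ℕ → ℂ := fun p => poch b p.1 * poch c p.2 * x ^ p.1 * z ^ p.2 /
    ((p.1.factorial : ℂ) * (p.2.factorial : ℂ)) with hK
  set f : ℕ × ℕ → ℝ → ℂ := fun p t =>
    (t:ℂ) ^ (a-1) * (1 - (t:ℂ)) ^ (d-a-1) * (t:ℂ) ^ (p.1 + p.2) * K p with hf
  set g : ℕ → ℝ → ℂ := fun k t =>
    (t:ℂ) ^ (a + k - 1) * (1 - (t:ℂ)) ^ (d - a - 1) with hg
  set A : ℝ → ℂ := fun t => (t:ℂ) ^ (a-1) * (1 - (t:ℂ)) ^ (d-a-1) with hA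
  have hdma : 0 < (d - a).re := by rw [Complex.sub_re]; linarith
  have huIcc : Set.uIcc (0:ℝ) y ⊆ Set.uIcc (0:ℝ) 1 := by
    apply Set.uIcc_subset_uIcc Set.left_mem_uIcc
    rw [Set.uIcc_of_le zero_le_one]
    exact ⟨hy0, hy1'⟩
  -- integrability of g k on Ioc 0 y
  have hgi : ∀ k : ℕ, IntegrableOn (g k) (Set.Ioc 0 y) := by
    intro k
    have h1 : IntervalIntegrable
        (fun t:ℝ => (t:ℂ)^((a + k) - 1) * (1-(t:ℂ))^((d-a) - 1)) volume 0 1 := by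
      apply Complex.betaIntegral_convergent _ hdma
      rw [Complex.add_re, Complex.natCast_re]
      linarith [show (0:ℝ) ≤ (k:ℝ) from k.cast_nonneg]
    exact (intervalIntegrable_iff_integrableOn_Ioc_of_le hy0).mp (h1.mono_set huIcc)
  have hAi : IntegrableOn A (Set.Ioc 0 y) := by
    have h1 : IntervalIntegrable
        (fun t:ℝ => (t:ℂ)^(a - 1) * (1-(t:ℂ))^((d-a) - 1)) volume 0 1 :=
      Complex.betaIntegral_convergent ha hdma
    exact (intervalIntegrable_iff_integrableOn_Ioc_of_le hy0).mp (h1.mono_set huIcc)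
  -- pointwise: f p = g (p.1+p.2) * K p on Ioc 0 y
  have hfg : ∀ p : ℕ×ℕ, Set.EqOn (f p) (fun t => g (p.1+p.2) t * K p) (Set.Ioc 0 y) := by
    intro p t ht
    obtain ⟨ht0, hty⟩ := ht
    have htne : (t:ℂ) ≠ 0 := by exact_mod_cast ne_of_gt ht0
    simp only [hf, hg]
    rw [show (t:ℂ) ^ (p.1 + p.2) = (t:ℂ) ^ (((p.1+p.2 : ℕ):ℂ)) from (Complex.cpow_natCast _ _).symm,
      show (a + ((p.1+p.2:ℕ):ℂ) - 1) = (a - 1) + ((p.1+p.2:ℕ):ℂ) by ring,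
      Complex.cpow_add _ _ htne]
    ring
  -- integrability of f p
  have hfi : ∀ p : ℕ×ℕ, IntegrableOn (f p) (Set.Ioc 0 y) := by
    intro p
    refine ((hgi (p.1+p.2)).mul_const (K p)).congr ?_
    exact (ae_restrict_iff' measurableSet_Ioc).mpr (ae_of_all _ (fun t ht => ((hfg p) ht).symm))
  -- value of each term integral
  have hfint : ∀ p : ℕ×ℕ, (∫ t in Set.Ioc 0 y, f p t) =
      incBeta y (a + ((p.1+p.2 : ℕ):ℂ)) (d - a) * K p := by
    intro p
    rw [setIntegral_congr_fun measurableSet_Ioc (hfg p), integral_mul_const]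
    congr 1
    rw [incBeta, intervalIntegral.integral_of_le hy0]
  -- pointwise sum identity on Ioc 0 y
  have hFsum : Set.EqOn
      (fun t:ℝ => (t:ℂ)^(a-1) * (1-(t:ℂ))^(d-a-1) * (1 - x*t)^(-b) * (1 - z*t)^(-c))
      (fun t => ∑' p : ℕ×ℕ, f p t) (Set.Ioc 0 y) := by
    intro t ht
    obtain ⟨ht0, hty⟩ := ht
    have hty1 : t < 1 := lt_of_le_of_lt hty hy1
    have hxt : ‖x * (t:ℂ)‖ < 1 := by
      rw [norm_mul, Complex.norm_real, Real.norm_of_nonneg ht0.le]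
      nlinarith [norm_nonneg x]
    have hzt : ‖z * (t:ℂ)‖ < 1 := by
      rw [norm_mul, Complex.norm_real, Real.norm_of_nonneg ht0.le]
      nlinarith [norm_nonneg z]
    have h1 := hasSum_binomial b (x * t) hxt
    have h2 := hasSum_binomial c (z * t) hzt
    have hs1 : Summable (fun m : ℕ => ‖poch b m / m.factorial * (x*t)^m‖) := by
      refine (summable_pochdiv_pow b (norm_nonneg _) hxt).congr ?_
      intro n; simp [norm_mul, norm_pow]
    have hs2 : Summable (fun m : ℕ => ‖poch c m / m.factorial * (z*t)^m‖) := by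
      refine (summable_pochdiv_pow c (norm_nonneg _) hzt).congr ?_
      intro n; simp [norm_mul, norm_pow]
    have hprod := summable_mul_of_summable_norm hs1 hs2
    have h3 := (h1.mul h2 hprod).mul_left ((t:ℂ)^(a-1) * (1-(t:ℂ))^(d-a-1))
    have h4 : (fun p : ℕ×ℕ => ((t:ℂ)^(a-1) * (1-(t:ℂ))^(d-a-1)) *
        ((poch b p.1 / p.1.factorial * (x*t)^p.1) * (poch c p.2 / p.2.factorial * (z*t)^p.2)))
        = fun p => f p t := by
      funext p
      simp only [hf, hK]
      rw [mul_pow, mul_pow, pow_add]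
      ring
    rw [h4] at h3
    simp only
    rw [h3.tsum_eq, mul_assoc]
  -- summability of coefficient bounds
  have hxy : ‖x‖ * y < 1 := by nlinarith [norm_nonneg x]
  have hzy : ‖z‖ * y < 1 := by nlinarith [norm_nonneg z]
  have hb1 : Summable (fun m : ℕ => ‖poch b m / m.factorial‖ * (‖x‖ * y)^m) :=
    summable_pochdiv_pow b (by positivity) hxy
  have hc1 : Summable (fun m : ℕ => ‖poch c m / m.factorial‖ * (‖z‖ * y)^m) :=
    summable_pochdiv_pow c (by positivity) hzy
  set Mre : ℕ×ℕ → ℝ := fun p => (‖poch b p.1 / p.1.factorial‖ * (‖x‖*y)^p.1) *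
    (‖poch c p.2 / p.2.factorial‖ * (‖z‖*y)^p.2) with hMre
  have hKsum : Summable Mre :=
    hb1.mul_of_nonneg hc1 (fun m => by positivity) (fun n => by positivity)
  have hMnn : ∀ p, 0 ≤ Mre p := fun p => by positivity
  have hM : ∀ p : ℕ×ℕ, y^(p.1+p.2) * ‖K p‖ = Mre p := by
    intro p
    simp only [hK, hMre, norm_div, norm_mul, norm_pow, Complex.norm_natCast, mul_pow, pow_add]
    have h1 : (0:ℝ) < p.1.factorial := by positivity
    have h2 : (0:ℝ) < p.2.factorial := by positivity
    field_simp
  -- lintegral bound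
  set I : ENNReal := ∫⁻ t in Set.Ioc 0 y, ‖A t‖₊ with hI
  have hIlt : I < ⊤ := hAi.2
  have hbound : ∀ p : ℕ×ℕ, (∫⁻ t in Set.Ioc 0 y, ‖f p t‖₊) ≤ I * ENNReal.ofReal (Mre p) := by
    intro p
    have hpt : ∀ᵐ t ∂(volume.restrict (Set.Ioc 0 y)),
        (‖f p t‖₊ : ℝ≥0∞) ≤ ‖A t‖₊ * ENNReal.ofReal (Mre p) := by
      refine (ae_restrict_iff' measurableSet_Ioc).mpr (ae_of_all _ (fun t ht => ?_))
      obtain ⟨ht0, hty⟩ := ht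
      rw [← enorm_eq_nnnorm, ← enorm_eq_nnnorm, ← ofReal_norm, ← ofReal_norm,
        ← ENNReal.ofReal_mul (norm_nonneg _)]
      apply ENNReal.ofReal_le_ofReal
      have : ‖f p t‖ = ‖A t‖ * t^(p.1+p.2) * ‖K p‖ := by
        simp only [hf, hA]
        rw [norm_mul, norm_mul, norm_pow, Complex.norm_real, Real.norm_of_nonneg ht0.le,
          norm_mul]
      rw [this, ← hM p, mul_assoc]
      apply mul_le_mul_of_nonneg_left _ (norm_nonneg _)
      apply mul_le_mul_of_nonneg_right _ (norm_nonneg _)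
      exact pow_le_pow_left₀ ht0.le hty _
    calc (∫⁻ t in Set.Ioc 0 y, ‖f p t‖₊)
        ≤ ∫⁻ t in Set.Ioc 0 y, ‖A t‖₊ * ENNReal.ofReal (Mre p) := lintegral_mono_ae hpt
      _ = I * ENNReal.ofReal (Mre p) := by
          rw [hI, lintegral_mul_const'' _ hAi.aestronglyMeasurable.aemeasurable.nnnorm.coe_nnreal_ennreal]
  have hne : (∑' p : ℕ×ℕ, ∫⁻ t in Set.Ioc 0 y, ‖f p t‖₊) ≠ ⊤ := by
    have h5 : (∑' p : ℕ×ℕ, ∫⁻ t in Set.Ioc 0 y, ‖f p t‖₊) ≤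
        I * ∑' p : ℕ×ℕ, ENNReal.ofReal (Mre p) := by
      rw [← ENNReal.tsum_mul_left]
      exact ENNReal.tsum_le_tsum hbound
    have h6 : (∑' p : ℕ×ℕ, ENNReal.ofReal (Mre p)) = ENNReal.ofReal (∑' p, Mre p) :=
      (ENNReal.ofReal_tsum_of_nonneg hMnn hKsum).symm
    refine ne_top_of_le_ne_top ?_ h5
    rw [h6]
    exact (ENNReal.mul_lt_top hIlt ENNReal.ofReal_lt_top).ne
  -- swap integral and sum
  have hswap : (∫ t in Set.Ioc 0 y, (∑' p : ℕ×ℕ, f p t)) =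
      ∑' p : ℕ×ℕ, ∫ t in Set.Ioc 0 y, f p t :=
    integral_tsum (fun p => (hfi p).aestronglyMeasurable) hne
  -- assemble
  calc incAppellF1 a b c d x z y
      = ∑' p : ℕ×ℕ, (1/B) * (incBeta y (a + ((p.1+p.2 : ℕ):ℂ)) (d-a) * K p) := by
        simp only [incAppellF1, ipochL, hK, hB]
        exact tsum_congr (fun p => by ring)
    _ = (1/B) * ∑' p : ℕ×ℕ, incBeta y (a + ((p.1+p.2 : ℕ):ℂ)) (d-a) * K p := tsum_mul_left
    _ = (1/B) * ∑' p : ℕ×ℕ, ∫ t in Set.Ioc 0 y, f p t := by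
        congr 1
        exact tsum_congr (fun p => (hfint p).symm)
    _ = (1/B) * ∫ t in Set.Ioc 0 y, (∑' p : ℕ×ℕ, f p t) := by rw [hswap]
    _ = (1/B) * ∫ t in Set.Ioc 0 y,
          (t:ℂ)^(a-1) * (1-(t:ℂ))^(d-a-1) * (1 - x*t)^(-b) * (1 - z*t)^(-c) := by
        congr 1
        exact (setIntegral_congr_fun measurableSet_Ioc hFsum).symm
    _ = (1/B) * ∫ t in (0:ℝ)..y,
          (t:ℂ)^(a-1) * (1-(t:ℂ))^(d-a-1) * (1 - x*t)^(-b) * (1 - z*t)^(-c) := by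
        rw [intervalIntegral.integral_of_le hy0]
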